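/- For a set R of Horn rules on a finite set Q, K(R) = A(R) (i.e., K(R) is an antimatroid) if and only if for every pair of nontrivial implicates (A, q) and (A', q') of K(R), both ((A ∪ A') \ {q, q'}, q) and ((A ∪ A') \ {q, q'}, q') are implicates of K(R). -/

import Mathlib

variable {α : Type*} [DecidableEq α] [Fintype α]

/-- A family of subsets is union-closed. -/
def UnionClosed (K : Set (Finset α)) : Prop :=
  ∀ X ∈ K, ∀ Y ∈ K, X ∪ Y ∈ K

/-- There is a tight path in `K` from `S` to `T`: a chain of members of `K`
each obtained from the previous by adding exactly one element. -/
def TightPath (K : Set (Finset α)) (S T : Finset α) : Prop :=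
  ∃ (k : ℕ) (Y : ℕ → Finset α), Y 0 = S ∧ Y k = T ∧ (∀ i ≤ k, Y i ∈ K) ∧
    ∀ i < k, Y i ⊆ Y (i + 1) ∧ (Y (i + 1) \ Y i).card = 1

/-- The family of members of `K` reachable from `∅` by a tight path in `K`. -/
def checkFam (K : Set (Finset α)) : Set (Finset α) :=
  {X | X ∈ K ∧ TightPath K ∅ X}

/-- Accessibility: every nonempty member can lose some element and stay in the family. -/
def Accessible (K : Set (Finset α)) : Prop :=
  ∀ X ∈ K, X ≠ ∅ → ∃ x ∈ X, X.erase x ∈ K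

/-- An antimatroid: contains `∅`, union-closed, and accessible. -/
def IsAntimatroid (K : Set (Finset α)) : Prop :=
  ∅ ∈ K ∧ UnionClosed K ∧ Accessible K

/-- A Horn rule `(A, q)` accepts `X` if `q ∈ X` implies `X ∩ A ≠ ∅`. -/
def Accepts (r : Finset α × α) (X : Finset α) : Prop :=
  r.2 ∈ X → (X ∩ r.1).Nonempty

/-- The union-closed family determined by a set of Horn rules. -/
def KFam (R : Set (Finset α × α)) : Set (Finset α) :=
  {X | ∀ r ∈ R, Accepts r X}

/-- The maximal antimatroid contained in `KFam R`. -/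
def AFam (R : Set (Finset α × α)) : Set (Finset α) :=
  checkFam (KFam R)

/-- A rule is an implicate of a family if it accepts every member. -/
def Implicate (K : Set (Finset α)) (r : Finset α × α) : Prop :=
  ∀ X ∈ K, Accepts r X

set_option linter.unusedSectionVars false

lemma empty_mem_KFam (R : Set (Finset α × α)) : (∅ : Finset α) ∈ KFam R := by
  intro r _ h
  exact absurd h (Finset.notMem_empty _)

lemma accessible_of_eq_checkFam {K : Set (Finset α)} (h : K = checkFam K) :
    Accessible K := by
  intro X hX hne
  rw [h] at hX
  obtain ⟨_, k, Y, h0, hk, hmem, hstep⟩ := hX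
  cases k with
  | zero => exact absurd (hk ▸ h0 : X = ∅) hne
  | succ k' =>
    obtain ⟨hsub, hcard⟩ := hstep k' (Nat.lt_succ_self k')
    obtain ⟨x, hx⟩ := Finset.card_eq_one.mp hcard
    have hxmem : x ∈ Y (k' + 1) \ Y k' := hx ▸ Finset.mem_singleton_self x
    rw [Finset.mem_sdiff] at hxmem
    refine ⟨x, hk ▸ hxmem.1, ?_⟩
    have hEq : (Y (k' + 1)).erase x = Y k' := by
      ext a
      simp only [Finset.mem_erase]
      constructor
      · rintro ⟨ha, haY⟩
        by_contra h'
        have : a ∈ Y (k' + 1) \ Y k' := Finset.mem_sdiff.mpr ⟨haY, h'⟩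
        rw [hx] at this
        exact ha (Finset.mem_singleton.mp this)
      · intro ha
        exact ⟨fun h' => hxmem.2 (h' ▸ ha), hsub ha⟩
    rw [← hk, hEq]
    exact hmem k' (Nat.le_succ k')

lemma mem_checkFam_of_accessible {K : Set (Finset α)} (hacc : Accessible K)
    (hemp : (∅ : Finset α) ∈ K) : ∀ X ∈ K, X ∈ checkFam K := by
  intro X
  induction X using Finset.strongInduction with
  | _ X ih =>
    intro hX
    by_cases hne : X = ∅
    · subst hne
      exact ⟨hX, 0, fun _ => ∅, rfl, rfl, fun i _ => hemp,
        fun i hi => absurd hi (Nat.not_lt_zero i)⟩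
    · obtain ⟨x, hxX, hEr⟩ := hacc X hX hne
      have hss : X.erase x ⊂ X := Finset.erase_ssubset hxX
      obtain ⟨_, k, Y, h0, hk, hmem, hstep⟩ := ih _ hss hEr
      refine ⟨hX, k + 1, fun i => if i ≤ k then Y i else X, by simp [h0], by simp, ?_, ?_⟩
      · intro i hi
        by_cases h : i ≤ k
        · simpa [h] using hmem i h
        · simpa [h] using hX
      · intro i hi
        by_cases h : i + 1 ≤ k
        · have h' : i ≤ k := Nat.le_of_succ_le h
          simpa [h, h'] using hstep i (Nat.lt_of_succ_le h)
        · have hik : i = k := by omega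
          subst hik
          have h1 : ¬ (i + 1 ≤ i) := by omega
          simp only [le_refl, if_pos, if_neg h1, hk]
          constructor
          · exact Finset.erase_subset x X
          · have hXd : X \ X.erase x = {x} := by
              ext a
              simp only [Finset.mem_sdiff, Finset.mem_erase, Finset.mem_singleton]
              constructor
              · rintro ⟨ha, hna⟩
                by_contra h'
                exact hna ⟨h', ha⟩
              · rintro rfl; exact ⟨hxX, fun h' => h'.1 rfl⟩
            rw [hXd, Finset.card_singleton]

lemma eq_checkFam_iff_accessible {K : Set (Finset α)} (hemp : (∅ : Finset α) ∈ K) :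
    K = checkFam K ↔ Accessible K := by
  constructor
  · exact accessible_of_eq_checkFam
  · intro hacc
    exact Set.Subset.antisymm (fun X hX => mem_checkFam_of_accessible hacc hemp X hX)
      (fun X hX => hX.1)

/-- Accessibility implies the implicate-exchange property. -/
lemma implicate_exchange_of_accessible {K : Set (Finset α)}
    (hacc : Accessible K) {A : Finset α} {q : α} {A' : Finset α} {q' : α}
    (hq : q ∉ A) (hq' : q' ∉ A')
    (hI : Implicate K (A, q)) (hI' : Implicate K (A', q')) :
    Implicate K ((A ∪ A') \ {q, q'}, q) := by
  set B := (A ∪ A') \ ({q, q'} : Finset α) with hB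
  suffices h : ∀ n, ∀ X ∈ K, X.card ≤ n → q ∈ X → X ∩ B ≠ ∅ by
    intro X hX hqX
    by_contra hc
    exact h X.card X hX le_rfl hqX (Finset.not_nonempty_iff_eq_empty.mp hc)
  intro n
  induction n with
  | zero =>
    intro X _ hcard hqX _
    rw [Nat.le_zero, Finset.card_eq_zero] at hcard
    subst hcard
    exact absurd hqX (Finset.notMem_empty q)
  | succ n ih =>
    intro X hX hcard hqX hXB
    have notB : ∀ b ∈ X, b ∈ A ∪ A' → b = q ∨ b = q' := by
      intro b hbX hbU
      have hbB : b ∉ B := fun h =>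
        (Finset.eq_empty_iff_forall_notMem.mp hXB b) (Finset.mem_inter.mpr ⟨hbX, h⟩)
      rw [hB, Finset.mem_sdiff] at hbB
      push_neg at hbB
      have := hbB hbU
      simpa using this
    -- q' ∈ X and q' ∈ A
    obtain ⟨a, haA⟩ := hI X hX hqX
    rw [Finset.mem_inter] at haA
    have haq' : a = q' := by
      rcases notB a haA.1 (Finset.mem_union_left _ haA.2) with rfl | rfl
      · exact absurd haA.2 hq
      · rfl
    subst haq'
    have hq'X : a ∈ X := haA.1
    have hq'A : a ∈ A := haA.2
    have hqne : q ≠ a := fun h => hq (h ▸ hq'A)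
    -- accessibility step
    have hne : X ≠ ∅ := Finset.ne_empty_of_mem hqX
    obtain ⟨x, hxX, hEr⟩ := hacc X hX hne
    by_cases hxq : x = q
    · subst hxq
      have hq'E : a ∈ X.erase x := Finset.mem_erase.mpr ⟨fun h => hqne h.symm, hq'X⟩
      obtain ⟨b, hbA'⟩ := hI' (X.erase x) hEr hq'E
      rw [Finset.mem_inter] at hbA'
      have hbX : b ∈ X := Finset.erase_subset _ _ hbA'.1
      rcases notB b hbX (Finset.mem_union_right _ hbA'.2) with rfl | rfl
      · exact absurd hbA'.1 (Finset.notMem_erase _ _)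
      · exact absurd hbA'.2 hq'
    · have hqE : q ∈ X.erase x := Finset.mem_erase.mpr ⟨fun h => hxq h.symm, hqX⟩
      have hcard' : (X.erase x).card ≤ n := by
        rw [Finset.card_erase_of_mem hxX]
        omega
      have hEB : X.erase x ∩ B = ∅ := by
        rw [Finset.eq_empty_iff_forall_notMem]
        intro b hb
        rw [Finset.mem_inter] at hb
        exact (Finset.eq_empty_iff_forall_notMem.mp hXB b)
          (Finset.mem_inter.mpr ⟨Finset.erase_subset _ _ hb.1, hb.2⟩)
      exact ih (X.erase x) hEr hcard' hqE hEB

/-- The exchange property implies accessibility. -/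
lemma accessible_of_exchange (R : Set (Finset α × α))
    (H : ∀ (A : Finset α) (q : α) (A' : Finset α) (q' : α),
        q ∉ A → q' ∉ A' →
        Implicate (KFam R) (A, q) → Implicate (KFam R) (A', q') →
        Implicate (KFam R) ((A ∪ A') \ {q, q'}, q) ∧
          Implicate (KFam R) ((A ∪ A') \ {q, q'}, q')) :
    Accessible (KFam R) := by
  intro X hX hne
  by_contra hc
  push_neg at hc
  -- for each x ∈ X there is a rule (a x, f x) with X ∩ a x = {x}, f x ∈ X, f x ≠ x
  have hch : ∀ x : α, ∃ p : Finset α × α, x ∈ X →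
      Implicate (KFam R) p ∧ p.2 ∈ X ∧ p.2 ≠ x ∧ X ∩ p.1 = {x} := by
    intro x
    by_cases hxX : x ∈ X
    · have hEr := hc x hxX
      rw [KFam, Set.mem_setOf_eq] at hEr
      push_neg at hEr
      obtain ⟨r, hrR, hracc⟩ := hEr
      rw [Accepts] at hracc
      push_neg at hracc
      obtain ⟨hr2, hrE⟩ := hracc
      refine ⟨r, fun _ => ⟨fun Z hZ => hZ r hrR, ?_, ?_, ?_⟩⟩
      · exact Finset.erase_subset _ _ hr2
      · exact (Finset.mem_erase.mp hr2).1
      · -- X ∩ r.1 = {x}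
        have hne' : (X ∩ r.1).Nonempty := hX r hrR (Finset.erase_subset _ _ hr2)
        ext b
        simp only [Finset.mem_inter, Finset.mem_singleton]
        constructor
        · rintro ⟨hbX, hbr⟩
          by_contra hbx
          have : b ∈ X.erase x ∩ r.1 :=
            Finset.mem_inter.mpr ⟨Finset.mem_erase.mpr ⟨hbx, hbX⟩, hbr⟩
          rw [hrE] at this
          exact absurd this (Finset.notMem_empty b)
        · rintro rfl
          refine ⟨hxX, ?_⟩
          by_contra hbr
          obtain ⟨c, hcmem⟩ := hne'
          rw [Finset.mem_inter] at hcmem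
          have : c ∈ X.erase b ∩ r.1 := by
            refine Finset.mem_inter.mpr ⟨Finset.mem_erase.mpr ⟨?_, hcmem.1⟩, hcmem.2⟩
            rintro rfl; exact hbr hcmem.2
          rw [hrE] at this
          exact absurd this (Finset.notMem_empty c)
    · exact ⟨(∅, x), fun h => absurd h hxX⟩
  choose g hg using hch
  set f : α → α := fun x => (g x).2 with hf
  set a : α → Finset α := fun x => (g x).1 with ha
  have hfX : ∀ x ∈ X, f x ∈ X := fun x hx => (hg x hx).2.1
  -- iterates stay in X
  obtain ⟨x₀, hx₀⟩ := Finset.nonempty_iff_ne_empty.mpr hne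
  have hiter : ∀ n, f^[n] x₀ ∈ X := by
    intro n
    induction n with
    | zero => simpa using hx₀
    | succ n ih => rw [Function.iterate_succ_apply']; exact hfX _ ih
  -- find a cycle
  obtain ⟨i, j, hnij, hij'⟩ := Finite.exists_ne_map_eq_of_infinite (fun n : ℕ => f^[n] x₀)
  have hij : f^[i] x₀ = f^[j] x₀ := hij'
  clear hij'
  wlog hlt : i < j generalizing i j
  · exact this j i hnij.symm hij.symm (by omega)
  set x₁ : α := f^[i] x₀ with hx₁
  set m : ℕ := j - i with hm
  have hm1 : 1 ≤ m := by omega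
  have hcyc : f^[m] x₁ = x₁ := by
    rw [hx₁, ← Function.iterate_add_apply]
    have : m + i = j := by omega
    rw [this, ← hij]
  have hx₁X : x₁ ∈ X := hiter i
  have hiter₁ : ∀ n, f^[n] x₁ ∈ X := by
    intro n
    rw [hx₁, ← Function.iterate_add_apply]
    exact hiter _
  -- key induction: combined implicates along the orbit
  have main : ∀ j : ℕ, 1 ≤ j → ∃ B : Finset α,
      Implicate (KFam R) (B, f^[j] x₁) ∧ f^[j] x₁ ∉ B ∧ X ∩ B ⊆ {x₁} := by
    intro j hj
    induction j, hj using Nat.le_induction with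
    | base =>
      refine ⟨a x₁, ?_, ?_, ?_⟩
      · simpa using (hg x₁ hx₁X).1
      · intro h
        have : f x₁ ∈ X ∩ a x₁ := Finset.mem_inter.mpr ⟨hfX _ hx₁X, by simpa using h⟩
        rw [(hg x₁ hx₁X).2.2.2] at this
        exact (hg x₁ hx₁X).2.2.1 (Finset.mem_singleton.mp this)
      · rw [show X ∩ a x₁ = {x₁} from (hg x₁ hx₁X).2.2.2]
    | succ j hj ih =>
      obtain ⟨B, hBimp, hBhead, hBtr⟩ := ih
      set y : α := f^[j] x₁ with hy
      have hyX : y ∈ X := hiter₁ j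
      have hgy := hg y hyX
      have hfy_not : f y ∉ a y := by
        intro h
        have : f y ∈ X ∩ a y := Finset.mem_inter.mpr ⟨hfX _ hyX, h⟩
        rw [hgy.2.2.2] at this
        exact hgy.2.2.1 (Finset.mem_singleton.mp this)
      have hfyimp : Implicate (KFam R) (a y, f y) := by simpa using hgy.1
      have hex := (H B y (a y) (f y) hBhead hfy_not hBimp hfyimp).2
      refine ⟨(B ∪ a y) \ {y, f y}, ?_, ?_, ?_⟩
      · rw [Function.iterate_succ_apply', ← hy]
        exact hex
      · rw [Function.iterate_succ_apply', ← hy]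
        intro h
        rw [Finset.mem_sdiff] at h
        exact h.2 (by simp)
      · intro z hz
        rw [Finset.mem_inter, Finset.mem_sdiff, Finset.mem_union] at hz
        obtain ⟨hzX, hzm, hznm⟩ := hz
        rcases hzm with hzB | hza
        · exact hBtr (Finset.mem_inter.mpr ⟨hzX, hzB⟩)
        · exfalso
          have : z ∈ X ∩ a y := Finset.mem_inter.mpr ⟨hzX, hza⟩
          rw [hgy.2.2.2] at this
          exact hznm (by simp [Finset.mem_singleton.mp this])
  obtain ⟨B, hBimp, hBhead, hBtr⟩ := main m hm1
  rw [hcyc] at hBimp hBhead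
  have hXB : (X ∩ B).Nonempty := hBimp X hX hx₁X
  obtain ⟨z, hz⟩ := hXB
  have : z = x₁ := Finset.mem_singleton.mp (hBtr hz)
  subst this
  exact hBhead (Finset.mem_inter.mp hz).2

theorem stmt16 (R : Set (Finset α × α)) :
    KFam R = AFam R ↔
      ∀ (A : Finset α) (q : α) (A' : Finset α) (q' : α),
        q ∉ A → q' ∉ A' →
        Implicate (KFam R) (A, q) → Implicate (KFam R) (A', q') →
        Implicate (KFam R) ((A ∪ A') \ {q, q'}, q) ∧
          Implicate (KFam R) ((A ∪ A') \ {q, q'}, q') := by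
  constructor
  · intro h A q A' q' hq hq' hI hI'
    have hacc : Accessible (KFam R) := accessible_of_eq_checkFam h
    constructor
    · exact implicate_exchange_of_accessible hacc hq hq' hI hI'
    · have := implicate_exchange_of_accessible hacc hq' hq hI' hI
      rwa [Finset.union_comm, Finset.pair_comm] at this
  · intro H
    have hacc := accessible_of_exchange R H
    exact (eq_checkFam_iff_accessible (empty_mem_KFam R)).mpr hacc
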